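/- Let Q = I − βP with P ≥ 0 entrywise, β ≥ 0, and P_max = sup over nonzero nonnegative vectors v of ||Pv||_1/||v||_1 satisfying β·P_max < 1. Suppose r ≥ 0 entrywise and r' = r − Q·r_S, where r_S is the restriction of r to a subset S of coordinates (r_S agrees with r on S and is 0 outside S). Then r' ≥ 0 entrywise and ||r'||_1 = ||r||_1 − ||r_S||_1 + β||P r_S||_1 ≤ (1 − γ(1 − βP_max))||r||_1, where γ = ||r_S||_1/||r||_1. -/
import Mathlib


open Matrix

/-- One step of LocalGD: with `Q = I - βP`, `P ≥ 0` entrywise, `β ≥ 0`,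
`P_max` bounding `‖Pv‖₁/‖v‖₁` over nonnegative `v` with `β P_max < 1`,
`r ≥ 0`, `r ≠ 0`, and `r' = r - Q r_S` (`r_S` the restriction of `r` to `S`),
we have `r' ≥ 0`, `‖r'‖₁ = ‖r‖₁ - ‖r_S‖₁ + β‖P r_S‖₁`, and
`‖r'‖₁ ≤ (1 - γ(1 - β P_max))‖r‖₁` with `γ = ‖r_S‖₁/‖r‖₁`. -/
theorem localGD_step (n : ℕ) (P : Matrix (Fin n) (Fin n) ℝ)
    (hP : ∀ i j, 0 ≤ P i j) (β : ℝ) (hβ : 0 ≤ β)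
    (Pmax : ℝ)
    (hPmax : ∀ v : Fin n → ℝ, (∀ i, 0 ≤ v i) →
      ∑ i, |(P *ᵥ v) i| ≤ Pmax * ∑ i, |v i|)
    (hβP : β * Pmax < 1)
    (r : Fin n → ℝ) (hr : ∀ i, 0 ≤ r i) (hr0 : r ≠ 0)
    (S : Finset (Fin n)) (rS : Fin n → ℝ)
    (hrS : ∀ i, rS i = if i ∈ S then r i else 0)
    (r' : Fin n → ℝ) (hr' : r' = r - (1 - β • P) *ᵥ rS) :
    (∀ i, 0 ≤ r' i) ∧
    (∑ i, |r' i|) = (∑ i, |r i|) - (∑ i, |rS i|) + β * ∑ i, |(P *ᵥ rS) i| ∧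
    (∑ i, |r' i|) ≤
      (1 - ((∑ i, |rS i|) / (∑ i, |r i|)) * (1 - β * Pmax)) * ∑ i, |r i| := by
  have hrS0 : ∀ i, 0 ≤ rS i := by
    intro i; rw [hrS]; split
    · exact hr i
    · exact le_refl 0
  have hrSle : ∀ i, rS i ≤ r i := by
    intro i; rw [hrS]; split
    · exact le_refl _
    · exact hr i
  have hPrS : ∀ i, 0 ≤ (P *ᵥ rS) i := by
    intro i
    rw [mulVec, dotProduct]
    exact Finset.sum_nonneg fun j _ => mul_nonneg (hP i j) (hrS0 j)
  have hr'i : ∀ i, r' i = r i - rS i + β * (P *ᵥ rS) i := by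
    intro i
    rw [hr']
    simp [sub_mulVec, one_mulVec, smul_mulVec]
    ring
  have hnn : ∀ i, 0 ≤ r' i := by
    intro i
    rw [hr'i]
    have := hrSle i
    have := mul_nonneg hβ (hPrS i)
    linarith
  refine ⟨hnn, ?_, ?_⟩
  · calc ∑ i, |r' i| = ∑ i, (r i - rS i + β * (P *ᵥ rS) i) := by
          refine Finset.sum_congr rfl fun i _ => ?_
          rw [abs_of_nonneg (hnn i), hr'i]
      _ = (∑ i, r i) - (∑ i, rS i) + β * ∑ i, (P *ᵥ rS) i := by
          rw [Finset.sum_add_distrib, Finset.sum_sub_distrib, Finset.mul_sum]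
      _ = (∑ i, |r i|) - (∑ i, |rS i|) + β * ∑ i, |(P *ᵥ rS) i| := by
          congr 1
          · congr 1 <;> exact Finset.sum_congr rfl fun i _ =>
              (abs_of_nonneg (by first | exact hr i | exact hrS0 i)).symm
          · congr 1
            exact Finset.sum_congr rfl fun i _ => (abs_of_nonneg (hPrS i)).symm
  · have hsum : (∑ i, |r' i|) = (∑ i, |r i|) - (∑ i, |rS i|) + β * ∑ i, |(P *ᵥ rS) i| := by
      calc ∑ i, |r' i| = ∑ i, (r i - rS i + β * (P *ᵥ rS) i) := by
            refine Finset.sum_congr rfl fun i _ => ?_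
            rw [abs_of_nonneg (hnn i), hr'i]
        _ = (∑ i, r i) - (∑ i, rS i) + β * ∑ i, (P *ᵥ rS) i := by
            rw [Finset.sum_add_distrib, Finset.sum_sub_distrib, Finset.mul_sum]
        _ = (∑ i, |r i|) - (∑ i, |rS i|) + β * ∑ i, |(P *ᵥ rS) i| := by
            congr 1
            · congr 1 <;> exact Finset.sum_congr rfl fun i _ =>
                (abs_of_nonneg (by first | exact hr i | exact hrS0 i)).symm
            · congr 1
              exact Finset.sum_congr rfl fun i _ => (abs_of_nonneg (hPrS i)).symm
    have hRpos : 0 < ∑ i, |r i| := by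
      obtain ⟨i, hi⟩ := Function.ne_iff.mp hr0
      have : 0 < |r i| := abs_pos.mpr hi
      exact Finset.sum_pos' (fun j _ => abs_nonneg _) ⟨i, Finset.mem_univ i, this⟩
    have hbound : β * ∑ i, |(P *ᵥ rS) i| ≤ β * Pmax * ∑ i, |rS i| := by
      have := hPmax rS hrS0
      calc β * ∑ i, |(P *ᵥ rS) i| ≤ β * (Pmax * ∑ i, |rS i|) :=
            mul_le_mul_of_nonneg_left this hβ
        _ = β * Pmax * ∑ i, |rS i| := by ring
    rw [hsum]
    have hgamma : ((∑ i, |rS i|) / (∑ i, |r i|)) * (∑ i, |r i|) = ∑ i, |rS i| :=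
      div_mul_cancel₀ _ (ne_of_gt hRpos)
    nlinarith [hbound, hgamma]
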